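/- Let A and Ã be real symmetric n×n matrices. Assume A has n distinct eigenvalues, for every eigenvector v of A one has 𝟙ᵀv ≠ 0, and there exists a permutation matrix Q with Q A = Ã Q. Then the set { P : P doubly stochastic, P A = Ã P } is exactly the singleton {Q}; in particular the LP relaxation of the graph isomorphism problem is tight for such graphs. -/

import Mathlib

open Matrix BigOperators

def IsPermMatrix {n : ℕ} (P : Matrix (Fin n) (Fin n) ℝ) : Prop :=
  (∀ i j, P i j = 0 ∨ P i j = 1) ∧ (∀ i, ∑ j, P i j = 1) ∧ (∀ j, ∑ i, P i j = 1)

def IsDoublyStochastic {n : ℕ} (P : Matrix (Fin n) (Fin n) ℝ) : Prop :=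
  (∀ i j, 0 ≤ P i j) ∧ (∀ i, ∑ j, P i j = 1) ∧ (∀ j, ∑ i, P i j = 1)

private lemma sumDotP {n : ℕ} (f : Fin n → Fin n → ℝ) (w : Fin n → ℝ) :
    (∑ j, f j) ⬝ᵥ w = ∑ j, f j ⬝ᵥ w := by
  simp only [dotProduct, Finset.sum_apply, Finset.sum_mul]
  exact Finset.sum_comm

private lemma dotPSum {n : ℕ} (w : Fin n → ℝ) (f : Fin n → Fin n → ℝ) :
    w ⬝ᵥ (∑ j, f j) = ∑ j, w ⬝ᵥ f j := by
  rw [dotProduct_comm, sumDotP]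
  exact Finset.sum_congr rfl fun j _ => dotProduct_comm _ _

theorem stmt_3 {n : ℕ} (A Atil : Matrix (Fin n) (Fin n) ℝ)
    (hA : A.IsSymm) (hAt : Atil.IsSymm)
    (hdist : ∃ (lam : Fin n → ℝ) (v : Fin n → Fin n → ℝ),
      Function.Injective lam ∧ ∀ i, v i ≠ 0 ∧ A *ᵥ v i = lam i • v i)
    (hone : ∀ (v : Fin n → ℝ) (μ : ℝ), v ≠ 0 → A *ᵥ v = μ • v → ∑ i, v i ≠ 0)
    (Q : Matrix (Fin n) (Fin n) ℝ) (hQ : IsPermMatrix Q) (hQA : Q * A = Atil * Q) :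
    {P : Matrix (Fin n) (Fin n) ℝ | IsDoublyStochastic P ∧ P * A = Atil * P} = {Q} := by
  rcases Nat.eq_zero_or_pos n with hn | hn
  · subst hn
    ext P
    simp only [Set.mem_setOf_eq, Set.mem_singleton_iff]
    constructor
    · intro _; exact Subsingleton.elim P Q
    · rintro rfl
      exact ⟨⟨fun i _ => i.elim0, fun i => i.elim0, fun j => j.elim0⟩,
        Subsingleton.elim _ _⟩
  haveI : Nonempty (Fin n) := ⟨⟨0, hn⟩⟩
  obtain ⟨lam, v, hlam, hv⟩ := hdist
  obtain ⟨h01, hrow, hcol⟩ := hQ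
  -- A is self-adjoint for the dot product
  have hsymm : ∀ (x y : Fin n → ℝ), (A *ᵥ x) ⬝ᵥ y = x ⬝ᵥ (A *ᵥ y) := by
    intro x y
    calc (A *ᵥ x) ⬝ᵥ y = y ⬝ᵥ (A *ᵥ x) := dotProduct_comm _ _
      _ = (A.vecMul y) ⬝ᵥ x := dotProduct_mulVec y A x
      _ = (Aᵀ *ᵥ y) ⬝ᵥ x := by rw [mulVec_transpose]
      _ = (A *ᵥ y) ⬝ᵥ x := by rw [hA.eq]
      _ = x ⬝ᵥ (A *ᵥ y) := dotProduct_comm _ _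
  -- eigenvectors are pairwise orthogonal
  have horth : ∀ i j, i ≠ j → v i ⬝ᵥ v j = 0 := by
    intro i j hij
    have h1 : lam i * (v i ⬝ᵥ v j) = lam j * (v i ⬝ᵥ v j) := by
      have h := hsymm (v i) (v j)
      rw [(hv i).2, (hv j).2, smul_dotProduct, dotProduct_smul] at h
      simpa using h
    have h2 : (lam i - lam j) * (v i ⬝ᵥ v j) = 0 := by rw [sub_mul, h1, sub_self]
    rcases mul_eq_zero.mp h2 with h | h
    · exact absurd (hlam (sub_eq_zero.mp h)) hij
    · exact h
  have hvsq : ∀ i, v i ⬝ᵥ v i ≠ 0 := fun i h =>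
    (hv i).1 (dotProduct_self_eq_zero.mp h)
  -- linear independence of the eigenvectors
  have hli : LinearIndependent ℝ v := by
    rw [Fintype.linearIndependent_iff]
    intro g hg i
    have h : (∑ j, g j • v j) ⬝ᵥ v i = 0 := by rw [hg]; simp
    rw [sumDotP] at h
    have h2 : ∀ j ∈ Finset.univ, j ≠ i → (g j • v j) ⬝ᵥ v i = 0 := by
      intro j _ hj
      rw [smul_dotProduct, horth j i hj, smul_zero]
    rw [Finset.sum_eq_single_of_mem i (Finset.mem_univ i) h2, smul_dotProduct,
      smul_eq_mul] at h
    exact (mul_eq_zero.mp h).resolve_right (hvsq i)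
  have hcard : Fintype.card (Fin n) = Module.finrank ℝ (Fin n → ℝ) := by simp
  let b : Module.Basis (Fin n) ℝ (Fin n → ℝ) := basisOfLinearIndependentOfCardEqFinrank hli hcard
  have hb : ⇑b = v := coe_basisOfLinearIndependentOfCardEqFinrank hli hcard
  have hrepr : ∀ x : Fin n → ℝ, ∃ d : Fin n → ℝ, ∑ j, d j • v j = x := by
    intro x
    refine ⟨b.repr x, ?_⟩
    conv_rhs => rw [← b.sum_repr x]
    exact Finset.sum_congr rfl fun j _ => by rw [hb]
  -- every λᵢ-eigenvector is a multiple of v i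
  have heig : ∀ (i : Fin n) (w : Fin n → ℝ), A *ᵥ w = lam i • w →
      ∃ cc : ℝ, w = cc • v i := by
    intro i w hw
    obtain ⟨d, hd⟩ := hrepr w
    refine ⟨d i, ?_⟩
    have h1 : A *ᵥ w = ∑ j, (d j * lam j) • v j := by
      rw [← hd, ← A.mulVecLin_apply, map_sum]
      refine Finset.sum_congr rfl fun j _ => ?_
      rw [LinearMap.map_smul, A.mulVecLin_apply, (hv j).2, smul_smul]
    have h2 : lam i • w = ∑ j, (lam i * d j) • v j := by
      rw [← hd, Finset.smul_sum]
      exact Finset.sum_congr rfl fun j _ => by rw [smul_smul]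
    have hAw : ∑ j, (d j * lam j) • v j = ∑ j, (lam i * d j) • v j := by
      rw [← h1, hw, h2]
    have hz : ∑ j, (d j * lam j - lam i * d j) • v j = 0 := by
      rw [Finset.sum_congr rfl fun j _ => sub_smul _ _ (v j), Finset.sum_sub_distrib,
        hAw, sub_self]
    have hzero : ∀ j, j ≠ i → d j = 0 := by
      intro j hj
      have hcoef := Fintype.linearIndependent_iff.mp hli _ hz j
      have h3 : d j * (lam j - lam i) = 0 := by ring_nf; ring_nf at hcoef; linarith
      rcases mul_eq_zero.mp h3 with h | h
      · exact h
      · exact absurd (hlam (sub_eq_zero.mp h)) hj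
    rw [← hd]
    exact Finset.sum_eq_single_of_mem i (Finset.mem_univ i)
      (fun j _ hj => by rw [hzero j hj, zero_smul])
  -- Q is orthogonal
  have hQtQ : Qᵀ * Q = 1 := by
    ext j k
    rw [Matrix.mul_apply, Matrix.one_apply]
    by_cases h : j = k
    · subst h
      rw [if_pos rfl, ← hcol j]
      refine Finset.sum_congr rfl fun i _ => ?_
      rcases h01 i j with hq | hq <;> simp [hq]
    · rw [if_neg h]
      refine Finset.sum_eq_zero fun i _ => ?_
      simp only [transpose_apply]
      rcases h01 i j with hj | hj
      · simp [hj]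
      rcases h01 i k with hk | hk
      · simp [hk]
      exfalso
      have hle : ∑ m ∈ ({j, k} : Finset (Fin n)), Q i m ≤ ∑ m, Q i m :=
        Finset.sum_le_sum_of_subset_of_nonneg (Finset.subset_univ _)
          (fun m _ _ => by rcases h01 i m with hm | hm <;> simp [hm])
      rw [Finset.sum_pair h, hrow i, hj, hk] at hle
      linarith
  have hQQt : Q * Qᵀ = 1 := mul_eq_one_comm.mp hQtQ
  -- the all-ones vector and its expansion
  set e : Fin n → ℝ := fun _ => (1 : ℝ) with he
  obtain ⟨a, ha⟩ := hrepr e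
  have hane : ∀ i, a i ≠ 0 := by
    intro i hai
    have hdot : v i ⬝ᵥ e = a i * (v i ⬝ᵥ v i) := by
      rw [← ha, dotPSum]
      rw [Finset.sum_eq_single_of_mem i (Finset.mem_univ i)
        (fun j _ hj => by rw [dotProduct_smul, horth i j (Ne.symm hj), smul_zero])]
      rw [dotProduct_smul, smul_eq_mul]
    have hsum : ∑ k, v i k ≠ 0 := hone (v i) (lam i) (hv i).1 (hv i).2
    apply hsum
    have h1 : v i ⬝ᵥ e = ∑ k, v i k := by simp [dotProduct, he]
    rw [← h1, hdot, hai, zero_mul]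
  -- main set equality
  ext P
  simp only [Set.mem_setOf_eq, Set.mem_singleton_iff]
  constructor
  · rintro ⟨⟨_, hProw, _⟩, hPA⟩
    set R := Qᵀ * P with hR
    have hT : A * Qᵀ = Qᵀ * Atil := by
      have h := congrArg Matrix.transpose hQA
      rw [transpose_mul, transpose_mul, hA.eq, hAt.eq] at h
      exact h
    have hcomm : R * A = A * R := by
      calc Qᵀ * P * A = Qᵀ * (Atil * P) := by rw [Matrix.mul_assoc, hPA]
        _ = (Qᵀ * Atil) * P := by rw [Matrix.mul_assoc]
        _ = (A * Qᵀ) * P := by rw [hT]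
        _ = A * (Qᵀ * P) := by rw [Matrix.mul_assoc]
    -- R fixes the all-ones vector
    have hRe : R *ᵥ e = e := by
      have hPe : P *ᵥ e = e := by
        funext i
        simp only [he, mulVec, dotProduct, mul_one]
        exact hProw i
      have hQe : Qᵀ *ᵥ e = e := by
        funext j
        simp only [he, mulVec, dotProduct, transpose_apply, mul_one]
        exact hcol j
      rw [hR, ← mulVec_mulVec, hPe, hQe]
    -- R fixes each eigendirection
    have hRv : ∀ i, ∃ cc : ℝ, R *ᵥ v i = cc • v i := by
      intro i
      apply heig
      calc A *ᵥ (R *ᵥ v i) = (A * R) *ᵥ v i := (mulVec_mulVec _ _ _)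
        _ = (R * A) *ᵥ v i := by rw [hcomm]
        _ = R *ᵥ (A *ᵥ v i) := (mulVec_mulVec _ _ _).symm
        _ = R *ᵥ (lam i • v i) := by rw [(hv i).2]
        _ = lam i • (R *ᵥ v i) := mulVec_smul _ _ _
    choose c hc using hRv
    -- comparing coefficients of e: c i = 1
    have hc1 : ∀ i, c i = 1 := by
      intro i
      have h1 : ∑ j, (a j * c j) • v j = ∑ j, a j • v j := by
        have hRee : R *ᵥ (∑ j, a j • v j) = ∑ j, (a j * c j) • v j := by
          rw [← R.mulVecLin_apply, map_sum]
          refine Finset.sum_congr rfl fun j _ => ?_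
          rw [LinearMap.map_smul, R.mulVecLin_apply, hc j, smul_smul]
        rw [ha, hRe] at hRee
        rw [← hRee, ha]
      have hz : ∑ j, (a j * c j - a j) • v j = 0 := by
        rw [Finset.sum_congr rfl fun j _ => sub_smul _ _ (v j), Finset.sum_sub_distrib,
          h1, sub_self]
      have h2 := Fintype.linearIndependent_iff.mp hli _ hz i
      have h3 : a i * (c i - 1) = 0 := by ring_nf; ring_nf at h2; linarith
      rcases mul_eq_zero.mp h3 with h | h
      · exact absurd h (hane i)
      · linarith
    have hRfix : ∀ x : Fin n → ℝ, R *ᵥ x = x := by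
      intro x
      obtain ⟨d, hd⟩ := hrepr x
      rw [← hd, ← R.mulVecLin_apply, map_sum]
      refine Finset.sum_congr rfl fun j _ => ?_
      rw [LinearMap.map_smul, R.mulVecLin_apply, hc j, hc1 j, one_smul]
    have hR1 : R = 1 := by
      ext i j
      have h := congrFun (hRfix (fun k => if k = j then 1 else 0)) i
      simp only [mulVec, dotProduct, mul_ite, mul_one, mul_zero,
        Finset.sum_ite_eq', Finset.mem_univ, if_true] at h
      rw [Matrix.one_apply, h]
    calc P = 1 * P := (Matrix.one_mul P).symm
      _ = (Q * Qᵀ) * P := by rw [hQQt]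
      _ = Q * (Qᵀ * P) := Matrix.mul_assoc _ _ _
      _ = Q * 1 := by rw [← hR, hR1]
      _ = Q := Matrix.mul_one Q
  · rintro rfl
    exact ⟨⟨fun i j => by rcases h01 i j with h | h <;> simp [h], hrow, hcol⟩, hQA⟩
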